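/- (Fractional Poincaré inequality for the mean value; core of the direct estimate for the L²-projection onto piecewise constants.) Let n ≥ 1, s > 0, and let τ ⊆ ℝⁿ be a Lebesgue measurable set with 0 < |τ| < ∞ and diam(τ) ≤ h. For v ∈ L²(τ) with mean v̄ = (1/|τ|) ∫_τ v, it holds that ∫_τ |v − v̄|² ≤ (h^{n+2s} / (2|τ|)) · ∬_{τ×τ} |v(x) − v(y)|² / |x − y|^{n+2s} dx dy. In particular, if h^n ≤ σ |τ| for some σ > 0 (shape regularity), then ‖v − v̄‖_{L²(τ)}² ≤ (σ/2) h^{2s} |v|_{s,τ}². -/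

import Mathlib

open MeasureTheory
open scoped ENNReal

/-- The Slobodeckij double-integral seminorm (squared) of `v` over `τ ⊆ ℝⁿ`, with values
in `[0, ∞]`:  `|v|_{s,τ}² = ∬_{τ×τ} |v(x) − v(y)|² / |x − y|^{n+2s} dx dy`. -/
noncomputable def slobodeckijSq (n : ℕ) (s : ℝ) (v : EuclideanSpace ℝ (Fin n) → ℝ)
    (τ : Set (EuclideanSpace ℝ (Fin n))) : ℝ≥0∞ :=
  ∫⁻ p in τ ×ˢ τ,
    ENNReal.ofReal (|v p.1 - v p.2| ^ 2 / ‖p.1 - p.2‖ ^ ((n : ℝ) + 2 * s)) ∂volume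

/-- Fractional Poincaré inequality for the mean value: for `τ ⊆ ℝⁿ` measurable with
`0 < |τ| < ∞` and `diam τ ≤ h`, and `v ∈ L²(τ)` with mean `v̄`,
`∫_τ |v − v̄|² ≤ (h^{n+2s}/(2|τ|)) |v|_{s,τ}²`; in particular, if `hⁿ ≤ σ |τ|`
(shape regularity), then `‖v − v̄‖_{L²(τ)}² ≤ (σ/2) h^{2s} |v|_{s,τ}²`. -/
theorem fractional_poincare_mean
    (n : ℕ) (hn : 1 ≤ n) (s : ℝ) (hs : 0 < s) (h : ℝ) (hh : 0 ≤ h)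
    (τ : Set (EuclideanSpace ℝ (Fin n))) (hτm : MeasurableSet τ)
    (hτpos : 0 < volume τ) (hτfin : volume τ < ⊤)
    (hdiam : EMetric.diam τ ≤ ENNReal.ofReal h)
    (v : EuclideanSpace ℝ (Fin n) → ℝ) (hv : MemLp v 2 (volume.restrict τ)) :
    (∫⁻ x in τ, ENNReal.ofReal
        ((v x - (∫ y in τ, v y) / (volume τ).toReal) ^ 2) ∂volume) ≤
      ENNReal.ofReal (h ^ ((n : ℝ) + 2 * s)) / (2 * volume τ) * slobodeckijSq n s v τ ∧
    ∀ σ : ℝ, 0 < σ → h ^ (n : ℝ) ≤ σ * (volume τ).toReal →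
      (∫⁻ x in τ, ENNReal.ofReal
          ((v x - (∫ y in τ, v y) / (volume τ).toReal) ^ 2) ∂volume) ≤
        ENNReal.ofReal (σ / 2 * h ^ (2 * s)) * slobodeckijSq n s v τ := by
  classical
  set μ : Measure (EuclideanSpace ℝ (Fin n)) := volume.restrict τ with hμdef
  haveI : IsFiniteMeasure μ := ⟨by
    rw [hμdef, Measure.restrict_apply_univ]; exact hτfin⟩
  set m : ℝ := (volume τ).toReal with hmdef
  have hm : 0 < m := ENNReal.toReal_pos hτpos.ne' hτfin.ne
  have hμuniv : (μ Set.univ).toReal = m := by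
    rw [hμdef, Measure.restrict_apply_univ]
  -- h is positive
  have hhpos : 0 < h := by
    rcases lt_or_eq_of_le hh with h0 | h0
    · exact h0
    · exfalso
      have hd0 : EMetric.diam τ = 0 := le_antisymm (by simpa [← h0] using hdiam) zero_le
      have hsub : τ.Subsingleton := EMetric.diam_eq_zero_iff.mp hd0
      haveI : Nonempty (Fin n) := Fin.pos_iff_nonempty.mp hn
      have := hsub.measure_zero (volume : Measure (EuclideanSpace ℝ (Fin n)))
      exact absurd this hτpos.ne'
  set P : ℝ := (n : ℝ) + 2 * s with hPdef
  have hPpos : 0 < P := by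
    have : (0:ℝ) ≤ (n:ℝ) := Nat.cast_nonneg n
    rw [hPdef]; linarith
  -- integrabilities
  have hv2 : Integrable (fun x => v x ^ 2) μ := hv.integrable_sq
  have hv1 : Integrable v μ := hv.integrable (by norm_num)
  set A : ℝ := ∫ y in τ, v y with hAdef
  set B : ℝ := ∫ y in τ, v y ^ 2 with hBdef
  set c : ℝ := A / m with hcdef
  -- L² expansion on τ
  have hw : MemLp (fun x => v x - c) 2 μ := hv.sub (memLp_const c)
  have hwint : Integrable (fun x => (v x - c) ^ 2) μ := hw.integrable_sq
  have key1 : ∫ x, (v x - c) ^ 2 ∂μ = B - A ^ 2 / m := by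
    have hfun : (fun x => (v x - c) ^ 2)
        = fun x => (v x ^ 2 - (2 * c) * v x) + c ^ 2 := by funext x; ring
    have hcm : Integrable (fun x => (2 * c) * v x) μ := hv1.const_mul _
    have hsub : Integrable (fun x => v x ^ 2 - (2 * c) * v x) μ := hv2.sub hcm
    rw [hfun, integral_add hsub (integrable_const _),
        integral_sub hv2 hcm, integral_const_mul, integral_const]
    simp only [smul_eq_mul, Measure.real, hμuniv]
    rw [hcdef]
    field_simp
    ring
  -- product expansion
  have hres : (volume : Measure (EuclideanSpace ℝ (Fin n) × EuclideanSpace ℝ (Fin n))).restrict (τ ×ˢ τ) = μ.prod μ := by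
    rw [Measure.volume_eq_prod, ← Measure.prod_restrict]
  have hone : Integrable (fun _ : EuclideanSpace ℝ (Fin n) => (1:ℝ)) μ := integrable_const 1
  have hf1 : Integrable (fun p : EuclideanSpace ℝ (Fin n) × EuclideanSpace ℝ (Fin n) => v p.1 ^ 2 * 1) (μ.prod μ) :=
    hv2.mul_prod hone
  have hf2 : Integrable (fun p : EuclideanSpace ℝ (Fin n) × EuclideanSpace ℝ (Fin n) => (1:ℝ) * v p.2 ^ 2) (μ.prod μ) :=
    hone.mul_prod hv2
  have hf3 : Integrable (fun p : EuclideanSpace ℝ (Fin n) × EuclideanSpace ℝ (Fin n) => (2 * v p.1) * v p.2) (μ.prod μ) :=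
    (hv1.const_mul 2).mul_prod hv1
  have hfun2 : (fun p : EuclideanSpace ℝ (Fin n) × EuclideanSpace ℝ (Fin n) => (v p.1 - v p.2) ^ 2)
      = fun p => (v p.1 ^ 2 * 1 + (1:ℝ) * v p.2 ^ 2) - (2 * v p.1) * v p.2 := by
    funext p; ring
  have hF : Integrable (fun p : EuclideanSpace ℝ (Fin n) × EuclideanSpace ℝ (Fin n) => (v p.1 - v p.2) ^ 2) (μ.prod μ) := by
    rw [hfun2]; exact (hf1.add hf2).sub hf3
  have hint1 : ∫ _, (1:ℝ) ∂μ = m := by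
    rw [integral_const]; simp [hμuniv]; exact hμuniv
  have key2 : ∫ p, (v p.1 - v p.2) ^ 2 ∂(μ.prod μ) = 2 * (m * B - A ^ 2) := by
    have hadd : Integrable
        (fun p : EuclideanSpace ℝ (Fin n) × EuclideanSpace ℝ (Fin n) =>
          v p.1 ^ 2 * 1 + (1:ℝ) * v p.2 ^ 2) (μ.prod μ) := hf1.add hf2
    have p1 := integral_prod_mul (μ := μ) (ν := μ) (fun x => v x ^ 2) (fun _ => (1:ℝ))
    have p2 := integral_prod_mul (μ := μ) (ν := μ) (fun _ => (1:ℝ)) (fun x => v x ^ 2)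
    have p3 := integral_prod_mul (μ := μ) (ν := μ) (fun x => 2 * v x) (fun x => v x)
    rw [hfun2, integral_sub hadd hf3, integral_add hf1 hf2, p1, p2, p3, hint1,
        integral_const_mul]
    rw [hAdef, hBdef]
    ring
  -- relation between the two quantities
  have hIeq : B - A ^ 2 / m = (2 * (m * B - A ^ 2)) / (2 * m) := by
    field_simp
  -- convert to lintegrals
  have L1 : (∫⁻ x in τ, ENNReal.ofReal ((v x - A / m) ^ 2) ∂volume)
      = ENNReal.ofReal (B - A ^ 2 / m) := by
    rw [← key1, ← hcdef,
      ← ofReal_integral_eq_lintegral_ofReal hwint (ae_of_all _ fun x => sq_nonneg _)]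
  have L2 : ENNReal.ofReal (2 * (m * B - A ^ 2))
      = ∫⁻ p, ENNReal.ofReal ((v p.1 - v p.2) ^ 2) ∂(μ.prod μ) := by
    rw [← key2]
    exact ofReal_integral_eq_lintegral_ofReal hF (ae_of_all _ fun p => sq_nonneg _)
  -- pointwise bound on τ ×ˢ τ
  have ptwise : ∀ p ∈ τ ×ˢ τ, ENNReal.ofReal ((v (Prod.fst p) - v p.2) ^ 2)
      ≤ ENNReal.ofReal (h ^ P) *
        ENNReal.ofReal (|v p.1 - v p.2| ^ 2 / ‖p.1 - p.2‖ ^ P) := by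
    rintro ⟨x, y⟩ ⟨hx, hy⟩
    rw [← ENNReal.ofReal_mul (Real.rpow_nonneg hh _)]
    apply ENNReal.ofReal_le_ofReal
    rcases eq_or_ne x y with rfl | hxy
    · simp
    · have hd : 0 < ‖x - y‖ := by
        rw [norm_pos_iff, sub_ne_zero]; exact hxy
      have hdh : ‖x - y‖ ≤ h := by
        have h1 : edist x y ≤ ENNReal.ofReal h :=
          le_trans (EMetric.edist_le_diam_of_mem hx hy) hdiam
        rw [edist_dist] at h1
        rw [← dist_eq_norm]
        exact (ENNReal.ofReal_le_ofReal_iff hh).mp h1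
      have h1 : ‖x - y‖ ^ P ≤ h ^ P := Real.rpow_le_rpow hd.le hdh hPpos.le
      have h2 : 0 < ‖x - y‖ ^ P := Real.rpow_pos_of_pos hd _
      calc (v x - v y) ^ 2 = |v x - v y| ^ 2 := (sq_abs _).symm
        _ = ‖x - y‖ ^ P * (|v x - v y| ^ 2 / ‖x - y‖ ^ P) := by
            field_simp
        _ ≤ h ^ P * (|v x - v y| ^ 2 / ‖x - y‖ ^ P) :=
            mul_le_mul_of_nonneg_right h1 (by positivity)
  have L3 : (∫⁻ p, ENNReal.ofReal ((v p.1 - v p.2) ^ 2) ∂(μ.prod μ))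
      ≤ ENNReal.ofReal (h ^ P) * slobodeckijSq n s v τ := by
    rw [← hres]
    unfold slobodeckijSq
    calc (∫⁻ p in τ ×ˢ τ, ENNReal.ofReal ((v p.1 - v p.2) ^ 2) ∂volume)
        ≤ ∫⁻ p in τ ×ˢ τ, ENNReal.ofReal (h ^ P) *
            ENNReal.ofReal (|v p.1 - v p.2| ^ 2 / ‖p.1 - p.2‖ ^ P) ∂volume := by
          refine lintegral_mono_ae ?_
          exact (ae_restrict_iff' (hτm.prod hτm)).mpr (ae_of_all _ ptwise)
      _ = ENNReal.ofReal (h ^ P) * ∫⁻ p in τ ×ˢ τ,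
            ENNReal.ofReal (|v p.1 - v p.2| ^ 2 / ‖p.1 - p.2‖ ^ P) ∂volume :=
          lintegral_const_mul' _ _ ENNReal.ofReal_ne_top
  have hμτ : ENNReal.ofReal (2 * m) = 2 * volume τ := by
    rw [ENNReal.ofReal_mul (by norm_num), hmdef, ENNReal.ofReal_toReal hτfin.ne]
    norm_num
  have main : (∫⁻ x in τ, ENNReal.ofReal ((v x - A / m) ^ 2) ∂volume)
      ≤ ENNReal.ofReal (h ^ P) / (2 * volume τ) * slobodeckijSq n s v τ := by
    rw [L1, hIeq, ENNReal.ofReal_div_of_pos (by linarith), L2, hμτ]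
    rw [div_eq_mul_inv, div_eq_mul_inv, mul_right_comm]
    exact mul_le_mul_left L3 _
  refine ⟨main, fun σ hσ hσh => ?_⟩
  refine le_trans main (mul_le_mul_left ?_ _)
  apply ENNReal.div_le_of_le_mul
  have h2s : (0:ℝ) ≤ h ^ (2 * s) := Real.rpow_nonneg hh _
  rw [← hμτ, ← ENNReal.ofReal_mul (by positivity)]
  apply ENNReal.ofReal_le_ofReal
  have : h ^ P = h ^ (n:ℝ) * h ^ (2 * s) := by
    rw [hPdef, Real.rpow_add hhpos]
  rw [this]
  calc h ^ (n:ℝ) * h ^ (2*s) ≤ (σ * m) * h ^ (2*s) :=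
        mul_le_mul_of_nonneg_right hσh h2s
    _ = σ / 2 * h ^ (2*s) * (2 * m) := by ring
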